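/- arXiv:2212.02956 — 7 statements merged into one kernel-verified Lean document; each statement's English description precedes it below -/
import Mathlib

section
/- A closed B-isotropic subspace L = graph′(u) of a super Hilbert space V, where u : V⁺ → V⁻ is a partial isometry, satisfies ΓL = L^⊥ (i.e., L is a Lagrangian) if and only if u is unitary. -/
noncomputable section

open Submodule ContinuousLinearMap

/-- Build an element of the `L²`-product from its two components. -/
abbrev p2 {α β : Type*} [AddCommGroup α] [Module ℝ α] [AddCommGroup β] [Module ℝ β]
    (a : α) (b : β) : WithLp 2 (α × β) :=
  (WithLp.linearEquiv 2 ℝ (α × β)).symm (a, b)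

/-- The `L²`-product as a linear equiv with the plain product. -/
abbrev unL2 {α β : Type*} [AddCommGroup α] [Module ℝ α] [AddCommGroup β] [Module ℝ β] :
    WithLp 2 (α × β) →ₗ[ℝ] α × β :=
  (WithLp.linearEquiv 2 ℝ (α × β)).toLinearMap

abbrev mkL2 {α β : Type*} [AddCommGroup α] [Module ℝ α] [AddCommGroup β] [Module ℝ β] :
    (α × β) →ₗ[ℝ] WithLp 2 (α × β) :=
  ((WithLp.linearEquiv 2 ℝ (α × β)).symm : (α × β) ≃ₗ[ℝ] WithLp 2 (α × β)).toLinearMap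

section Defs

variable {Vp Vm : Type*} [NormedAddCommGroup Vp] [InnerProductSpace ℝ Vp]
  [NormedAddCommGroup Vm] [InnerProductSpace ℝ Vm]

/-- The grading operator `Γ` on the super Hilbert space `V = Vp ⊕ Vm` (`Γ = 1` on `V⁺ = Vp`,
`Γ = -1` on `V⁻ = Vm`). -/
def sGrading : WithLp 2 (Vp × Vm) →ₗ[ℝ] WithLp 2 (Vp × Vm) :=
  mkL2 ∘ₗ ((LinearMap.fst ℝ Vp Vm).prod (-(LinearMap.snd ℝ Vp Vm))) ∘ₗ unL2

/-- `L` is isotropic for the form `B(x, y) = ⟪J x, y⟫`. -/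
def IsIsotropicWith {W : Type*} [NormedAddCommGroup W] [InnerProductSpace ℝ W]
    (J : W →ₗ[ℝ] W) (L : Submodule ℝ W) : Prop :=
  ∀ x ∈ L, ∀ y ∈ L, (inner ℝ (J x) y : ℝ) = 0

/-- `L` is a Lagrangian with respect to the grading `J`, i.e. `J L = Lᗮ`. -/
def IsLagrangianWith {W : Type*} [NormedAddCommGroup W] [InnerProductSpace ℝ W]
    (J : W →ₗ[ℝ] W) (L : Submodule ℝ W) : Prop :=
  L.map J = Lᗮ

/-- `L ⊆ V = Vp ⊕ Vm` is `B`-isotropic, where `B(x,y) = ⟪Γ x, y⟫`. -/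
def IsIsotropic (L : Submodule ℝ (WithLp 2 (Vp × Vm))) : Prop :=
  IsIsotropicWith sGrading L

/-- The image `Γ L` of a subspace under the grading operator. -/
def gradingMap (L : Submodule ℝ (WithLp 2 (Vp × Vm))) : Submodule ℝ (WithLp 2 (Vp × Vm)) :=
  L.map sGrading

/-- `L` is a Lagrangian in the super Hilbert space `Vp ⊕ Vm`: `Γ L = Lᗮ`. -/
def IsLagrangian (L : Submodule ℝ (WithLp 2 (Vp × Vm))) : Prop :=
  IsLagrangianWith sGrading L

/-- The restricted graph `graph′(u) = graph(u) ∩ (ker u)ᗮ` of `u : V⁺ → V⁻`, inside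
`V = Vp ⊕ Vm`. -/
def graphPI (u : Vp →L[ℝ] Vm) : Submodule ℝ (WithLp 2 (Vp × Vm)) :=
  (LinearMap.ker (u : Vp →ₗ[ℝ] Vm))ᗮ.map (mkL2 ∘ₗ (LinearMap.id : Vp →ₗ[ℝ] Vp).prod u.toLinearMap)

/-- The full graph `graph(u) = {(x, u x)}` of `u : V⁺ → V⁻`, inside `V = Vp ⊕ Vm`. -/
def graphFull (u : Vp →ₗ[ℝ] Vm) : Submodule ℝ (WithLp 2 (Vp × Vm)) :=
  (⊤ : Submodule ℝ Vp).map (mkL2 ∘ₗ (LinearMap.id : Vp →ₗ[ℝ] Vp).prod u)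

/-- The restricted graph of an operator `w : V⁻ → V⁺`, viewed inside `V = Vp ⊕ Vm`
via `y ↦ (w y, y)`. -/
def graphPIrev (w : Vm →L[ℝ] Vp) : Submodule ℝ (WithLp 2 (Vp × Vm)) :=
  (LinearMap.ker (w : Vm →ₗ[ℝ] Vp))ᗮ.map (mkL2 ∘ₗ w.toLinearMap.prod (LinearMap.id : Vm →ₗ[ℝ] Vm))

/-- `u` is a partial isometry: it is isometric on `(ker u)ᗮ`. -/
def IsPartialIsometry (u : Vp →L[ℝ] Vm) : Prop :=
  ∀ x ∈ (LinearMap.ker (u : Vp →ₗ[ℝ] Vm))ᗮ, ‖u x‖ = ‖x‖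

/-- `u` is unitary: a surjective isometry. -/
def IsUnitaryOp {E F : Type*} [NormedAddCommGroup E] [InnerProductSpace ℝ E]
    [NormedAddCommGroup F] [InnerProductSpace ℝ F] (u : E →L[ℝ] F) : Prop :=
  (∀ x, ‖u x‖ = ‖x‖) ∧ Function.Surjective u

end Defs

section CorrDefs

variable {Ap Am Bp Bm : Type*} [NormedAddCommGroup Ap] [InnerProductSpace ℝ Ap]
  [NormedAddCommGroup Am] [InnerProductSpace ℝ Am]
  [NormedAddCommGroup Bp] [InnerProductSpace ℝ Bp]
  [NormedAddCommGroup Bm] [InnerProductSpace ℝ Bm]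

/-- The grading `Γ(x₀, x₁) = (-Γ₀ x₀, Γ₁ x₁)` on `Π V₀ ⊕ V₁`, where `V₀ = Ap ⊕ Am` and
`V₁ = Bp ⊕ Bm`. -/
def corrGrading :
    WithLp 2 (WithLp 2 (Ap × Am) × WithLp 2 (Bp × Bm)) →ₗ[ℝ]
      WithLp 2 (WithLp 2 (Ap × Am) × WithLp 2 (Bp × Bm)) :=
  mkL2 ∘ₗ ((-(sGrading : WithLp 2 (Ap × Am) →ₗ[ℝ] WithLp 2 (Ap × Am))).prodMap
    (sGrading : WithLp 2 (Bp × Bm) →ₗ[ℝ] WithLp 2 (Bp × Bm))) ∘ₗ unL2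

/-- `L` is a Lagrangian correspondence from `V₀ = Ap ⊕ Am` to `V₁ = Bp ⊕ Bm`, i.e. a
Lagrangian in `Π V₀ ⊕ V₁`. -/
def IsLagCorr (L : Submodule ℝ (WithLp 2 (WithLp 2 (Ap × Am) × WithLp 2 (Bp × Bm)))) : Prop :=
  IsLagrangianWith corrGrading L

/-- `L` is `B`-isotropic in `Π V₀ ⊕ V₁`. -/
def IsIsotropicCorr (L : Submodule ℝ (WithLp 2 (WithLp 2 (Ap × Am) × WithLp 2 (Bp × Bm)))) :
    Prop :=
  IsIsotropicWith corrGrading L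

/-- The graph of a map `u : (ΠV₀ ⊕ V₁)⁺ = V₀⁻ ⊕ V₁⁺ → V₀⁺ ⊕ V₁⁻ = (ΠV₀ ⊕ V₁)⁻`, as a linear
map into `ΠV₀ ⊕ V₁`; an element `(b, c)` is sent to `((u(b,c)₁, b), (c, u(b,c)₂))`. -/
def corrGraphMap (u : WithLp 2 (Am × Bp) →L[ℝ] WithLp 2 (Ap × Bm)) :
    WithLp 2 (Am × Bp) →ₗ[ℝ] WithLp 2 (WithLp 2 (Ap × Am) × WithLp 2 (Bp × Bm)) :=
  mkL2 ∘ₗ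
    ((mkL2 ∘ₗ (((LinearMap.fst ℝ Ap Bm) ∘ₗ unL2 ∘ₗ u.toLinearMap).prod
        ((LinearMap.fst ℝ Am Bp) ∘ₗ unL2))).prod
      (mkL2 ∘ₗ (((LinearMap.snd ℝ Am Bp) ∘ₗ unL2).prod
        ((LinearMap.snd ℝ Ap Bm) ∘ₗ unL2 ∘ₗ u.toLinearMap))))

/-- The graph of `u : (ΠV₀ ⊕ V₁)⁺ → (ΠV₀ ⊕ V₁)⁻` as a subspace of `ΠV₀ ⊕ V₁`. -/
def corrGraph (u : WithLp 2 (Am × Bp) →L[ℝ] WithLp 2 (Ap × Bm)) :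
    Submodule ℝ (WithLp 2 (WithLp 2 (Ap × Am) × WithLp 2 (Bp × Bm))) :=
  LinearMap.range (corrGraphMap u)

end CorrDefs

section Comp

variable {W0 W1 W2 : Type*} [NormedAddCommGroup W0] [InnerProductSpace ℝ W0]
  [NormedAddCommGroup W1] [InnerProductSpace ℝ W1]
  [NormedAddCommGroup W2] [InnerProductSpace ℝ W2]

/-- The composition `L₁₂ ∘ L₀₁ = {(x₀, x₂) | ∃ x₁, (x₀, x₁) ∈ L₀₁ ∧ (x₁, x₂) ∈ L₁₂}` of two
correspondences `L₀₁ ⊆ W0 ⊕ W1` and `L₁₂ ⊆ W1 ⊕ W2`. -/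
def compCorr (L01 : Submodule ℝ (WithLp 2 (W0 × W1))) (L12 : Submodule ℝ (WithLp 2 (W1 × W2))) :
    Submodule ℝ (WithLp 2 (W0 × W2)) :=
  Submodule.map
    (mkL2 ∘ₗ
      (((LinearMap.fst ℝ W0 W1 ∘ₗ unL2) ∘ₗ
          LinearMap.fst ℝ (WithLp 2 (W0 × W1)) (WithLp 2 (W1 × W2))).prod
        ((LinearMap.snd ℝ W1 W2 ∘ₗ unL2) ∘ₗ
          LinearMap.snd ℝ (WithLp 2 (W0 × W1)) (WithLp 2 (W1 × W2)))))
    ((L01.prod L12) ⊓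
      LinearMap.ker
        (((LinearMap.snd ℝ W0 W1 ∘ₗ unL2) ∘ₗ
            LinearMap.fst ℝ (WithLp 2 (W0 × W1)) (WithLp 2 (W1 × W2))) -
          ((LinearMap.fst ℝ W1 W2 ∘ₗ unL2) ∘ₗ
            LinearMap.snd ℝ (WithLp 2 (W0 × W1)) (WithLp 2 (W1 × W2)))))

end Comp

/-- `u` is a Hilbert–Schmidt operator: `∑ ‖u eᵢ‖²` converges for every Hilbert basis. -/
def IsHilbertSchmidt {E F : Type*} [NormedAddCommGroup E] [InnerProductSpace ℝ E]
    [NormedAddCommGroup F] [InnerProductSpace ℝ F] (u : E →L[ℝ] F) : Prop :=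
  ∀ (ι : Type) (b : HilbertBasis ι ℝ E), Summable fun i => ‖u (b i)‖ ^ 2

section Aux

variable {Vp Vm : Type*} [NormedAddCommGroup Vp] [InnerProductSpace ℝ Vp]
  [NormedAddCommGroup Vm] [InnerProductSpace ℝ Vm]

private lemma p2_inj {a c : Vp} {b d : Vm} (h : p2 a b = p2 c d) : a = c ∧ b = d := by
  have := congrArg (WithLp.equiv 2 (Vp × Vm)) h
  simpa [Prod.ext_iff] using this

private lemma p2_eta (z : WithLp 2 (Vp × Vm)) : p2 z.fst z.snd = z := rfl

private lemma sGrading_p2 (a : Vp) (b : Vm) : sGrading (p2 a b) = p2 a (-b) := rfl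

private lemma inner_p2 (a c : Vp) (b d : Vm) :
    (inner ℝ (p2 a b) (p2 c d) : ℝ) = inner ℝ a c + inner ℝ b d := rfl

private lemma mem_graphPI (u : Vp →L[ℝ] Vm) (z : WithLp 2 (Vp × Vm)) :
    z ∈ graphPI u ↔ ∃ x ∈ (LinearMap.ker (u : Vp →ₗ[ℝ] Vm))ᗮ, p2 x (u x) = z := Iff.rfl

/-- Norm preservation gives inner product preservation (real polarization). -/
private lemma inner_map_of_norm (u : Vp →L[ℝ] Vm) {x y : Vp}
    (hx : ‖u x‖ = ‖x‖) (hy : ‖u y‖ = ‖y‖) (hxy : ‖u (x + y)‖ = ‖x + y‖) :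
    (inner ℝ (u x) (u y) : ℝ) = inner ℝ x y := by
  rw [real_inner_eq_norm_add_mul_self_sub_norm_mul_self_sub_norm_mul_self_div_two,
    real_inner_eq_norm_add_mul_self_sub_norm_mul_self_sub_norm_mul_self_div_two x y,
    ← map_add, hx, hy, hxy]

end Aux

/-- The closed `B`-isotropic subspace `L = graph′(u)` is a Lagrangian
(`Γ L = Lᗮ`) if and only if the partial isometry `u` is unitary. -/
theorem graphPI_lagrangian_iff_unitary
    {Vp Vm : Type*} [NormedAddCommGroup Vp] [InnerProductSpace ℝ Vp] [CompleteSpace Vp]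
    [NormedAddCommGroup Vm] [InnerProductSpace ℝ Vm] [CompleteSpace Vm]
    (u : Vp →L[ℝ] Vm) (hu : IsPartialIsometry u) :
    IsLagrangian (graphPI u) ↔ IsUnitaryOp u := by
  constructor
  · intro h
    -- `h : (graphPI u).map sGrading = (graphPI u)ᗮ`
    have h' : (graphPI u).map sGrading = (graphPI u)ᗮ := h
    -- Step 1: `ker u = ⊥`.
    have hker : LinearMap.ker (u : Vp →ₗ[ℝ] Vm) = ⊥ := by
      rw [Submodule.eq_bot_iff]
      intro k hk
      have hmem : p2 k (0 : Vm) ∈ (graphPI u)ᗮ := by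
        rw [Submodule.mem_orthogonal]
        rintro w hw
        obtain ⟨x, hx, rfl⟩ := (mem_graphPI u w).mp hw
        rw [inner_p2]
        have h1 : (inner ℝ x k : ℝ) = 0 := real_inner_comm k x ▸ hx k hk
        simp [h1]
      rw [← h'] at hmem
      obtain ⟨w, hw, hww⟩ := Submodule.mem_map.mp hmem
      obtain ⟨x, hx, rfl⟩ := (mem_graphPI u w).mp hw
      rw [sGrading_p2] at hww
      obtain ⟨h1, h2⟩ := p2_inj hww
      have hux : u k = 0 := by
        have := congrArg Neg.neg h2
        simpa [h1] using this
      subst h1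
      have : (inner ℝ x x : ℝ) = 0 := hx x hux
      simpa using (inner_self_eq_zero (𝕜 := ℝ)).mp this
    have hKtop : (LinearMap.ker (u : Vp →ₗ[ℝ] Vm))ᗮ = ⊤ := by
      rw [hker, Submodule.bot_orthogonal_eq_top]
    have hn : ∀ x, ‖u x‖ = ‖x‖ := fun x => hu x (by rw [hKtop]; trivial)
    refine ⟨hn, ?_⟩
    -- Step 2: surjectivity.
    have hRclosed : IsClosed (Set.range u) := by
      have hiso : Isometry ⇑u := AddMonoidHomClass.isometry_of_norm u hn
      exact hiso.isClosedEmbedding.isClosed_range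
    set R : Submodule ℝ Vm := LinearMap.range (u : Vp →ₗ[ℝ] Vm) with hR
    have : CompleteSpace R := hRclosed.completeSpace_coe
    have hRbot : Rᗮ = ⊥ := by
      rw [Submodule.eq_bot_iff]
      intro c hc
      have hmem : p2 (0 : Vp) (-c) ∈ (graphPI u)ᗮ := by
        rw [Submodule.mem_orthogonal]
        rintro w hw
        obtain ⟨x, hx, rfl⟩ := (mem_graphPI u w).mp hw
        rw [inner_p2]
        have h1 : (inner ℝ (u x) c : ℝ) = 0 :=
          real_inner_comm c (u x) ▸ hc (u x) (LinearMap.mem_range_self _ x)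
        simp [inner_neg_right, h1]
      rw [← h'] at hmem
      obtain ⟨w, hw, hww⟩ := Submodule.mem_map.mp hmem
      obtain ⟨x, hx, rfl⟩ := (mem_graphPI u w).mp hw
      rw [sGrading_p2] at hww
      obtain ⟨h1, h2⟩ := p2_inj hww
      simpa [h1] using h2.symm
    have hRtop : R = ⊤ := by
      have := congrArg Submodule.orthogonal hRbot
      rwa [Submodule.orthogonal_orthogonal, Submodule.bot_orthogonal_eq_top] at this
    exact LinearMap.range_eq_top.mp hRtop
  · rintro ⟨hn, hs⟩
    have hker : LinearMap.ker (u : Vp →ₗ[ℝ] Vm) = ⊥ := by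
      rw [Submodule.eq_bot_iff]
      intro k hk
      have : ‖k‖ = 0 := by rw [← hn k]; simpa using hk
      simpa using this
    have hKtop : (LinearMap.ker (u : Vp →ₗ[ℝ] Vm))ᗮ = ⊤ := by
      rw [hker, Submodule.bot_orthogonal_eq_top]
    set a : Vm →L[ℝ] Vp := ContinuousLinearMap.adjoint u with ha
    have hau : ∀ x, a (u x) = x := by
      intro x
      refine ext_inner_right ℝ fun y => ?_
      rw [ContinuousLinearMap.adjoint_inner_left]
      exact inner_map_of_norm u (hn x) (hn y) (hn (x + y))
    have hua : ∀ c, u (a c) = c := by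
      intro c
      obtain ⟨w, rfl⟩ := hs c
      rw [hau]
    show (graphPI u).map sGrading = (graphPI u)ᗮ
    ext z
    rw [Submodule.mem_orthogonal]
    constructor
    · rintro ⟨w, hw, rfl⟩
      obtain ⟨x, hx, rfl⟩ := (mem_graphPI u w).mp hw
      rintro w' hw'
      obtain ⟨x', hx', rfl⟩ := (mem_graphPI u w').mp hw'
      rw [sGrading_p2, inner_p2, inner_neg_right,
        inner_map_of_norm u (hn x') (hn x) (hn (x' + x))]
      ring
    · intro hz
      have key : z.fst + a z.snd = 0 := by
        have h0 : ∀ x : Vp, (inner ℝ x (z.fst + a z.snd) : ℝ) = 0 := by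
          intro x
          have := hz (p2 x (u x)) ((mem_graphPI u _).mpr ⟨x, by rw [hKtop]; trivial, rfl⟩)
          rw [← p2_eta z, inner_p2] at this
          rw [inner_add_right, ContinuousLinearMap.adjoint_inner_right]
          exact this
        have := h0 (z.fst + a z.snd)
        exact (inner_self_eq_zero (𝕜 := ℝ)).mp this
      refine ⟨p2 z.fst (u z.fst), (mem_graphPI u _).mpr ⟨z.fst, by rw [hKtop]; trivial, rfl⟩, ?_⟩
      have h1 : z.fst = -a z.snd := eq_neg_of_add_eq_zero_left key
      have h2 : -u z.fst = z.snd := by rw [h1, map_neg, hua, neg_neg]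
      rw [sGrading_p2, h2]
      exact p2_eta z
end
end

section
/- A closed B-isotropic subspace L = graph′(u) of a super Hilbert space V, with u : V⁺ → V⁻ a partial isometry, is a sub-Lagrangian (i.e., L + ΓL has finite codimension in V) if and only if u is a Fredholm operator. -/
noncomputable section

open Submodule ContinuousLinearMap

section ProofAux

variable {Vp Vm : Type*} [NormedAddCommGroup Vp] [InnerProductSpace ℝ Vp] [CompleteSpace Vp]
  [NormedAddCommGroup Vm] [InnerProductSpace ℝ Vm] [CompleteSpace Vm]

lemma myRangeMap (u : Vp →L[ℝ] Vm) :
    ((LinearMap.ker (u : Vp →ₗ[ℝ] Vm))ᗮ).map u.toLinearMap = LinearMap.range (u : Vp →ₗ[ℝ] Vm) := by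
  haveI : CompleteSpace (LinearMap.ker (u : Vp →ₗ[ℝ] Vm)) :=
    (ContinuousLinearMap.isClosed_ker u).completeSpace_coe
  haveI : CompleteSpace ((LinearMap.ker (u : Vp →ₗ[ℝ] Vm))ᗮ : Submodule ℝ Vp) :=
    (Submodule.isClosed_orthogonal _).completeSpace_coe
  apply le_antisymm
  · rintro y ⟨x, hx, rfl⟩; exact ⟨x, rfl⟩
  · rintro y ⟨x, rfl⟩
    refine ⟨orthogonalProjection (LinearMap.ker (u : Vp →ₗ[ℝ] Vm))ᗮ x, Submodule.coe_mem _, ?_⟩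
    have h2 := sub_starProjection_mem_orthogonal (K := (LinearMap.ker (u : Vp →ₗ[ℝ] Vm))ᗮ) x
    rw [Submodule.orthogonal_orthogonal] at h2
    have h3 : u x - u (orthogonalProjection (LinearMap.ker (u : Vp →ₗ[ℝ] Vm))ᗮ x) = 0 := by
      rw [← map_sub]; exact LinearMap.mem_ker.mp h2
    exact (sub_eq_zero.mp h3).symm

lemma myClosedRange (u : Vp →L[ℝ] Vm) (hu : IsPartialIsometry u) :
    IsClosed ((LinearMap.range (u : Vp →ₗ[ℝ] Vm) : Submodule ℝ Vm) : Set Vm) := by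
  haveI : CompleteSpace ((LinearMap.ker (u : Vp →ₗ[ℝ] Vm))ᗮ : Submodule ℝ Vp) :=
    (Submodule.isClosed_orthogonal _).completeSpace_coe
  let f : ((LinearMap.ker (u : Vp →ₗ[ℝ] Vm))ᗮ : Submodule ℝ Vp) →ₗᵢ[ℝ] Vm :=
    ⟨u.toLinearMap ∘ₗ ((LinearMap.ker (u : Vp →ₗ[ℝ] Vm))ᗮ).subtype, fun x => hu x x.2⟩
  have h : ((LinearMap.range (u : Vp →ₗ[ℝ] Vm) : Submodule ℝ Vm) : Set Vm) = Set.range f := by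
    rw [← myRangeMap u]
    ext y
    constructor
    · rintro ⟨x, hx, rfl⟩; exact ⟨⟨x, hx⟩, rfl⟩
    · rintro ⟨x, rfl⟩; exact ⟨x, x.2, rfl⟩
  rw [h]
  exact f.isometry.isClosedEmbedding.isClosed_range

lemma mySup (u : Vp →L[ℝ] Vm) :
    graphPI u ⊔ gradingMap (graphPI u) =
      (((LinearMap.ker (u : Vp →ₗ[ℝ] Vm))ᗮ).prod (LinearMap.range (u : Vp →ₗ[ℝ] Vm))).map
        (mkL2 : (Vp × Vm) →ₗ[ℝ] WithLp 2 (Vp × Vm)) := by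
  apply le_antisymm
  · apply sup_le
    · rintro z ⟨x, hx, rfl⟩
      exact ⟨(x, u x), ⟨hx, ⟨x, rfl⟩⟩, rfl⟩
    · rintro z ⟨w, ⟨x, hx, rfl⟩, rfl⟩
      exact ⟨(x, -(u x)), ⟨hx, neg_mem ⟨x, rfl⟩⟩, rfl⟩
  · rintro z ⟨⟨a, b⟩, ⟨ha, hb⟩, rfl⟩
    rw [← myRangeMap u] at hb
    obtain ⟨c, hc, hcb⟩ := hb
    have hcb' : (u c : Vm) = b := hcb
    set x := (2 : ℝ)⁻¹ • (a + c) with hxdef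
    set y := (2 : ℝ)⁻¹ • (a - c) with hydef
    have hx : x ∈ (LinearMap.ker (u : Vp →ₗ[ℝ] Vm))ᗮ := smul_mem _ _ (add_mem ha hc)
    have hy : y ∈ (LinearMap.ker (u : Vp →ₗ[ℝ] Vm))ᗮ := smul_mem _ _ (sub_mem ha hc)
    apply Submodule.mem_sup.mpr
    refine ⟨(mkL2 (x, u x) : WithLp 2 (Vp × Vm)), ⟨x, hx, rfl⟩,
      (mkL2 (y, -(u y)) : WithLp 2 (Vp × Vm)),
      ⟨(mkL2 (y, u y) : WithLp 2 (Vp × Vm)), ⟨y, hy, rfl⟩, rfl⟩, ?_⟩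
    have h1 : x + y = a := by rw [hxdef, hydef]; module
    have h2 : u x + -(u y) = b := by
      rw [← hcb', ← map_neg, ← map_add]
      congr 1
      rw [hxdef, hydef]; module
    rw [← map_add]
    show (mkL2 ((x, u x) + (y, -(u y))) : WithLp 2 (Vp × Vm)) = mkL2 (a, b)
    rw [Prod.mk_add_mk, h1, h2]

end ProofAux


/-- The closed `B`-isotropic subspace `L = graph′(u)` is a sub-Lagrangian
(`L + ΓL` has finite codimension) if and only if `u` is Fredholm. -/
theorem graphPI_subLagrangian_iff_fredholm
    {Vp Vm : Type*} [NormedAddCommGroup Vp] [InnerProductSpace ℝ Vp] [CompleteSpace Vp]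
    [NormedAddCommGroup Vm] [InnerProductSpace ℝ Vm] [CompleteSpace Vm]
    (u : Vp →L[ℝ] Vm) (hu : IsPartialIsometry u) :
    FiniteDimensional ℝ (WithLp 2 (Vp × Vm) ⧸ (graphPI u ⊔ gradingMap (graphPI u))) ↔
      (FiniteDimensional ℝ (LinearMap.ker (u : Vp →ₗ[ℝ] Vm)) ∧
        FiniteDimensional ℝ (Vm ⧸ LinearMap.range (u : Vp →ₗ[ℝ] Vm)) ∧
        IsClosed ((LinearMap.range (u : Vp →ₗ[ℝ] Vm) : Submodule ℝ Vm) : Set Vm)) := by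
  haveI : CompleteSpace (LinearMap.ker (u : Vp →ₗ[ℝ] Vm)) :=
    (ContinuousLinearMap.isClosed_ker u).completeSpace_coe
  haveI : CompleteSpace ((LinearMap.ker (u : Vp →ₗ[ℝ] Vm))ᗮ : Submodule ℝ Vp) :=
    (Submodule.isClosed_orthogonal _).completeSpace_coe
  set K : Submodule ℝ Vp := (LinearMap.ker (u : Vp →ₗ[ℝ] Vm))ᗮ with hKdef
  set R : Submodule ℝ Vm := LinearMap.range (u : Vp →ₗ[ℝ] Vm) with hRdef
  have hmap : (graphPI u ⊔ gradingMap (graphPI u)).map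
      ((WithLp.linearEquiv 2 ℝ (Vp × Vm) : WithLp 2 (Vp × Vm) ≃ₗ[ℝ] Vp × Vm) :
        WithLp 2 (Vp × Vm) →ₗ[ℝ] Vp × Vm) = K.prod R := by
    rw [mySup u, ← Submodule.map_comp]
    have hid : ((WithLp.linearEquiv 2 ℝ (Vp × Vm)).toLinearMap ∘ₗ
        (mkL2 : (Vp × Vm) →ₗ[ℝ] WithLp 2 (Vp × Vm))) = LinearMap.id := rfl
    rw [hid, Submodule.map_id]
  let e1 : (WithLp 2 (Vp × Vm) ⧸ (graphPI u ⊔ gradingMap (graphPI u))) ≃ₗ[ℝ]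
      ((Vp × Vm) ⧸ K.prod R) :=
    Submodule.Quotient.equiv _ _ (WithLp.linearEquiv 2 ℝ (Vp × Vm)) hmap
  let g : (Vp × Vm) →ₗ[ℝ] (Vp ⧸ K) × (Vm ⧸ R) := (K.mkQ).prodMap R.mkQ
  have hgker : LinearMap.ker g = K.prod R := by
    rw [show g = (K.mkQ).prodMap R.mkQ from rfl, LinearMap.ker_prodMap,
      Submodule.ker_mkQ, Submodule.ker_mkQ]
  have hgsurj : Function.Surjective g := by
    rintro ⟨c, d⟩
    obtain ⟨a, rfl⟩ := K.mkQ_surjective c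
    obtain ⟨b, rfl⟩ := R.mkQ_surjective d
    exact ⟨(a, b), rfl⟩
  let e2 : ((Vp × Vm) ⧸ K.prod R) ≃ₗ[ℝ] (Vp ⧸ K) × (Vm ⧸ R) :=
    (Submodule.quotEquivOfEq _ _ hgker.symm).trans (LinearMap.quotKerEquivOfSurjective g hgsurj)
  let E := e1.trans e2
  have hcompl : IsCompl K Kᗮ := Submodule.isCompl_orthogonal_of_hasOrthogonalProjection
  let e3 : (Vp ⧸ K) ≃ₗ[ℝ] (LinearMap.ker (u : Vp →ₗ[ℝ] Vm) : Submodule ℝ Vp) :=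
    (Submodule.quotientEquivOfIsCompl K Kᗮ hcompl).trans
      (LinearEquiv.ofEq _ _ (Submodule.orthogonal_orthogonal _))
  constructor
  · intro h
    haveI : FiniteDimensional ℝ ((Vp ⧸ K) × (Vm ⧸ R)) := Module.Finite.equiv E
    haveI h1 : FiniteDimensional ℝ (Vp ⧸ K) :=
      FiniteDimensional.of_injective (LinearMap.inl ℝ (Vp ⧸ K) (Vm ⧸ R)) LinearMap.inl_injective
    haveI h2 : FiniteDimensional ℝ (Vm ⧸ R) :=
      FiniteDimensional.of_injective (LinearMap.inr ℝ (Vp ⧸ K) (Vm ⧸ R)) LinearMap.inr_injective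
    exact ⟨Module.Finite.equiv e3, h2, myClosedRange u hu⟩
  · rintro ⟨h1, h2, -⟩
    haveI := h1
    haveI : FiniteDimensional ℝ (Vp ⧸ K) := Module.Finite.equiv e3.symm
    haveI := h2
    exact Module.Finite.equiv E.symm
end
end

section
/- If L is a B-isotropic subspace of a super Hilbert space V and graph(u) ⊆ L for some everywhere-defined linear operator u : V⁺ → V⁻, then u is an isometry and L = graph(u); moreover (L + ΓL)^⊥ = ker(u*) ⊆ V⁻. -/
noncomputable section

open Submodule ContinuousLinearMap

/-- If `L` is `B`-isotropic and `graph(u) ⊆ L` for an everywhere-defined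
linear operator `u : V⁺ → V⁻`, then `u` is an isometry, `L = graph(u)`, and
`(L + ΓL)ᗮ = ker(u*) ⊆ V⁻`. -/
theorem isotropic_containing_graph
    {Vp Vm : Type*} [NormedAddCommGroup Vp] [InnerProductSpace ℝ Vp] [CompleteSpace Vp]
    [NormedAddCommGroup Vm] [InnerProductSpace ℝ Vm] [CompleteSpace Vm]
    (L : Submodule ℝ (WithLp 2 (Vp × Vm))) (hL : IsIsotropic L)
    (u : Vp →ₗ[ℝ] Vm) (hgraph : graphFull u ≤ L) :
    (∀ x, ‖u x‖ = ‖x‖) ∧ L = graphFull u ∧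
      ∃ U : Vp →L[ℝ] Vm, (∀ x, U x = u x) ∧
        (L ⊔ gradingMap L)ᗮ =
          Submodule.comap (unL2 : WithLp 2 (Vp × Vm) →ₗ[ℝ] Vp × Vm)
            (Submodule.prod (⊥ : Submodule ℝ Vp)
              (LinearMap.ker (ContinuousLinearMap.adjoint U : Vm →ₗ[ℝ] Vp))) := by
  classical
  -- basic facts
  have hmem : ∀ x : Vp, p2 x (u x) ∈ L := fun x => hgraph ⟨x, trivial, rfl⟩
  have hgr : ∀ (a : Vp) (b : Vm), (sGrading (p2 a b) : WithLp 2 (Vp × Vm)) = p2 a (-b) := fun a b => rfl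
  have hinner : ∀ (a c : Vp) (b d : Vm), (inner ℝ (p2 a b) (p2 c d) : ℝ) = inner ℝ a c + inner ℝ b d := by
    intro a c b d; rw [WithLp.prod_inner_apply]; rfl
  -- u preserves inner products
  have hkey : ∀ x y : Vp, (inner ℝ (u x) (u y) : ℝ) = inner ℝ x y := by
    intro x y
    have h := hL _ (hmem x) _ (hmem y)
    rw [hgr, hinner, inner_neg_left] at h
    linarith
  have hiso : ∀ x : Vp, ‖u x‖ = ‖x‖ := by
    intro x
    have h2 : ‖u x‖ ^ 2 = ‖x‖ ^ 2 := by
      rw [← real_inner_self_eq_norm_sq, ← real_inner_self_eq_norm_sq]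
      exact hkey x x
    nlinarith [norm_nonneg (u x), norm_nonneg x, sq_nonneg (‖u x‖ - ‖x‖), sq_nonneg (‖u x‖ + ‖x‖)]
  -- the continuous version of u
  let U : Vp →L[ℝ] Vm := u.mkContinuous 1 (fun x => by rw [hiso, one_mul])
  have hU : ∀ x, U x = u x := fun x => rfl
  have hUadj : ∀ b x, (inner ℝ (ContinuousLinearMap.adjoint U b) x : ℝ) = inner ℝ b (u x) := by
    intro b x
    rw [ContinuousLinearMap.adjoint_inner_left, hU]
  have hUU : ∀ a : Vp, ContinuousLinearMap.adjoint U (U a) = a := by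
    intro a
    apply ext_inner_right ℝ
    intro y
    rw [hUadj, hU, hkey]
  -- L = graph u
  have hLle : L ≤ graphFull u := by
    intro z hz
    have hz2 : z = p2 (WithLp.equiv 2 (Vp × Vm) z).1 (WithLp.equiv 2 (Vp × Vm) z).2 := rfl
    set a := (WithLp.equiv 2 (Vp × Vm) z).1 with ha'
    set b := (WithLp.equiv 2 (Vp × Vm) z).2 with hb'
    have h1 : ∀ x : Vp, (inner ℝ a x : ℝ) = inner ℝ b (u x) := by
      intro x
      have h := hL _ hz _ (hmem x)
      rw [hz2, hgr, hinner, inner_neg_left] at h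
      linarith
    have ha : a = ContinuousLinearMap.adjoint U b := by
      apply ext_inner_right ℝ
      intro y
      rw [hUadj, h1]
    have hself : ‖a‖ ^ 2 = ‖b‖ ^ 2 := by
      have h := hL _ hz _ hz
      rw [hz2, hgr, hinner, inner_neg_left, real_inner_self_eq_norm_sq,
        real_inner_self_eq_norm_sq] at h
      linarith
    set r := b - U a with hr'
    have hradj : ContinuousLinearMap.adjoint U r = 0 := by
      rw [hr', map_sub, hUU, ← ha, sub_self]
    have hUar : (inner ℝ (U a) r : ℝ) = 0 := by
      rw [← ContinuousLinearMap.adjoint_inner_right, hradj, inner_zero_right]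
    have hb : b = U a + r := by rw [hr']; abel
    have hnb : ‖b‖ ^ 2 = ‖a‖ ^ 2 + ‖r‖ ^ 2 := by
      rw [hb, norm_add_sq_real, hUar]
      have : ‖U a‖ = ‖a‖ := by rw [hU, hiso]
      rw [this]; ring
    have hr0 : r = 0 := by
      have : ‖r‖ ^ 2 = 0 := by linarith
      have := pow_eq_zero_iff (n := 2) (by norm_num) |>.mp this
      exact norm_eq_zero.mp this
    have hbua : b = u a := by rw [hb, hr0, add_zero, hU]
    refine ⟨a, trivial, ?_⟩
    show p2 a (u a) = z
    rw [← hbua]; exact hz2.symm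
  have hLeq : L = graphFull u := le_antisymm hLle hgraph
  refine ⟨hiso, hLeq, U, hU, ?_⟩
  -- the orthogonal complement statement
  ext z
  have hz2 : z = p2 (WithLp.equiv 2 (Vp × Vm) z).1 (WithLp.equiv 2 (Vp × Vm) z).2 := rfl
  set a := (WithLp.equiv 2 (Vp × Vm) z).1 with ha'
  set b := (WithLp.equiv 2 (Vp × Vm) z).2 with hb'
  have hrhs : z ∈ Submodule.comap (unL2 : WithLp 2 (Vp × Vm) →ₗ[ℝ] Vp × Vm)
      (Submodule.prod (⊥ : Submodule ℝ Vp)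
        (LinearMap.ker (ContinuousLinearMap.adjoint U : Vm →ₗ[ℝ] Vp))) ↔
      a = 0 ∧ ContinuousLinearMap.adjoint U b = 0 := by
    simp only [Submodule.mem_comap, Submodule.mem_prod, Submodule.mem_bot, LinearMap.mem_ker]
    rfl
  rw [hrhs, Submodule.mem_orthogonal]
  constructor
  · intro h
    have h1 : ∀ x : Vp, (inner ℝ x a : ℝ) + inner ℝ (u x) b = 0 := by
      intro x
      have := h _ (le_sup_left (α := Submodule ℝ (WithLp 2 (Vp × Vm)))
        (a := L) (b := gradingMap L) (hmem x))
      rw [hz2, hinner] at this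
      linarith [this]
    have h2 : ∀ x : Vp, (inner ℝ x a : ℝ) - inner ℝ (u x) b = 0 := by
      intro x
      have hmem2 : (sGrading (p2 x (u x)) : WithLp 2 (Vp × Vm)) ∈ gradingMap L :=
        Submodule.mem_map_of_mem (hmem x)
      have := h _ (le_sup_right (α := Submodule ℝ (WithLp 2 (Vp × Vm)))
        (a := L) (b := gradingMap L) hmem2)
      rw [hgr, hz2, hinner, inner_neg_left] at this
      linarith [this]
    have ha0 : a = 0 := by
      have := h1 a
      have := h2 a
      have haa : (inner ℝ a a : ℝ) = 0 := by linarith [h1 a, h2 a]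
      exact inner_self_eq_zero.mp haa
    have hub : ∀ x : Vp, (inner ℝ (u x) b : ℝ) = 0 := by
      intro x; linarith [h1 x, h2 x]
    refine ⟨ha0, ?_⟩
    have : (inner ℝ (ContinuousLinearMap.adjoint U b) (ContinuousLinearMap.adjoint U b) : ℝ) = 0 := by
      rw [hUadj, real_inner_comm]
      exact hub _
    exact inner_self_eq_zero.mp this
  · rintro ⟨ha0, hb0⟩ w hw
    rcases Submodule.mem_sup.mp hw with ⟨w1, hw1, w2, hw2, rfl⟩
    rcases hLle hw1 with ⟨x, -, rfl⟩
    rw [gradingMap, Submodule.mem_map] at hw2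
    rcases hw2 with ⟨v, hv, rfl⟩
    rcases hLle hv with ⟨y, -, rfl⟩
    have e1 : (inner ℝ ((mkL2 ∘ₗ (LinearMap.id : Vp →ₗ[ℝ] Vp).prod u) x) z : ℝ) = 0 := by
      have : ((mkL2 ∘ₗ (LinearMap.id : Vp →ₗ[ℝ] Vp).prod u) x : WithLp 2 (Vp × Vm)) = p2 x (u x) := rfl
      rw [this, hz2, hinner, ha0, inner_zero_right, real_inner_comm, ← hUadj, hb0,
        inner_zero_left]
      ring
    have e2 : (inner ℝ (sGrading ((mkL2 ∘ₗ (LinearMap.id : Vp →ₗ[ℝ] Vp).prod u) y)) z : ℝ) = 0 := by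
      have : ((mkL2 ∘ₗ (LinearMap.id : Vp →ₗ[ℝ] Vp).prod u) y : WithLp 2 (Vp × Vm)) = p2 y (u y) := rfl
      rw [this, hgr, hz2, hinner, ha0, inner_zero_right, inner_neg_left, real_inner_comm,
        ← hUadj, hb0, inner_zero_left]
      ring
    rw [inner_add_left, e1, e2, add_zero]
end
end

section
/- Let L ⊆ ΠV₀ ⊕ V₁ be a Lagrangian correspondence in general position, i.e., L ∩ (V₀ ⊕ {0}) = L ∩ ({0} ⊕ V₁) = {0}. Then L is the graph of a closed, densely defined linear operator T : V₀ → V₁ with trivial kernel and dense range. -/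
noncomputable section

open Submodule ContinuousLinearMap

theorem aux_orth_map {W : Type*} [NormedAddCommGroup W] [InnerProductSpace ℝ W]
    (J : W →ₗ[ℝ] W) (hinv : ∀ x, J (J x) = x)
    (hip : ∀ x y, (inner ℝ (J x) (J y) : ℝ) = inner ℝ x y) (M : Submodule ℝ W) :
    (M.map J)ᗮ = Mᗮ.map J := by
  ext x
  simp only [Submodule.mem_orthogonal, Submodule.mem_map]
  constructor
  · intro h
    refine ⟨J x, fun u hu => ?_, hinv x⟩
    have h1 := h (J u) ⟨u, hu, rfl⟩
    have h2 := hip u (J x)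
    rw [hinv] at h2
    rw [← h2]
    exact h1
  · rintro ⟨y, hy, rfl⟩ u ⟨v, hv, rfl⟩
    rw [hip]
    exact hy v hv

/-- A Lagrangian correspondence `L ⊆ ΠV₀ ⊕ V₁` in general position is the
graph of a closed, densely defined operator `T : V₀ → V₁` with trivial kernel and dense
range. -/
theorem lagCorr_general_position_is_graph
    {V0p V0m V1p V1m : Type*}
    [NormedAddCommGroup V0p] [InnerProductSpace ℝ V0p] [CompleteSpace V0p]
    [NormedAddCommGroup V0m] [InnerProductSpace ℝ V0m] [CompleteSpace V0m]
    [NormedAddCommGroup V1p] [InnerProductSpace ℝ V1p] [CompleteSpace V1p]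
    [NormedAddCommGroup V1m] [InnerProductSpace ℝ V1m] [CompleteSpace V1m]
    (L : Submodule ℝ (WithLp 2 (WithLp 2 (V0p × V0m) × WithLp 2 (V1p × V1m))))
    (hLag : IsLagCorr L)
    (hgen1 : ∀ p ∈ L, p.snd = 0 → p = 0) (hgen2 : ∀ p ∈ L, p.fst = 0 → p = 0) :
    ∃ T : WithLp 2 (V0p × V0m) →ₗ.[ℝ] WithLp 2 (V1p × V1m),
      T.graph = L.map (unL2 : WithLp 2 (WithLp 2 (V0p × V0m) × WithLp 2 (V1p × V1m)) →ₗ[ℝ] _) ∧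
      IsClosed ((T.graph : Submodule ℝ (WithLp 2 (V0p × V0m) × WithLp 2 (V1p × V1m))) :
        Set (WithLp 2 (V0p × V0m) × WithLp 2 (V1p × V1m))) ∧
      Dense (T.domain : Set (WithLp 2 (V0p × V0m))) ∧
      Dense (Set.range fun x : T.domain => T x) ∧
      (∀ x : T.domain, T x = 0 → (x : WithLp 2 (V0p × V0m)) = 0) := by
  classical
  set A := WithLp 2 (V0p × V0m) with hA
  set B := WithLp 2 (V1p × V1m) with hB
  have hLag' : L.map corrGrading = Lᗮ := hLag
  have corrApply : ∀ x : WithLp 2 (A × B),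
      corrGrading x = WithLp.toLp 2 (WithLp.toLp 2 (-x.fst.fst, -(-x.fst.snd)),
        WithLp.toLp 2 (x.snd.fst, -x.snd.snd)) := fun _ => rfl
  have hinv : ∀ x : WithLp 2 (A × B), corrGrading (corrGrading x) = x := by
    intro x
    rw [corrApply, corrApply]
    simp [Prod.ext_iff]
    rfl
  have hip : ∀ x y : WithLp 2 (A × B),
      (inner ℝ (corrGrading x) (corrGrading y) : ℝ) = inner ℝ x y := by
    intro x y
    show (inner ℝ (-x.fst.fst) (-y.fst.fst) + inner ℝ (-(-x.fst.snd)) (-(-y.fst.snd)))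
        + (inner ℝ x.snd.fst y.snd.fst + inner ℝ (-x.snd.snd) (-y.snd.snd))
      = (inner ℝ x.fst.fst y.fst.fst + inner ℝ x.fst.snd y.fst.snd)
        + (inner ℝ x.snd.fst y.snd.fst + inner ℝ x.snd.snd y.snd.snd)
    simp
  have horth : (L.map corrGrading)ᗮ = Lᗮ.map corrGrading := aux_orth_map _ hinv hip L
  have hLrr : L = Lᗮᗮ := by
    have hid : (corrGrading : WithLp 2 (A × B) →ₗ[ℝ] WithLp 2 (A × B)) ∘ₗ corrGrading
        = LinearMap.id := LinearMap.ext hinv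
    calc L = (L.map corrGrading).map corrGrading := by
            rw [← Submodule.map_comp, hid, Submodule.map_id]
      _ = Lᗮ.map corrGrading := by rw [hLag']
      _ = (L.map corrGrading)ᗮ := horth.symm
      _ = Lᗮᗮ := by rw [hLag']
  have hLclosed : IsClosed (L : Set (WithLp 2 (A × B))) := by
    rw [hLrr]; exact Submodule.isClosed_orthogonal _
  have hmemOrth : ∀ w : WithLp 2 (A × B), w ∈ Lᗮ ↔ ∃ p ∈ L, corrGrading p = w := by
    intro w; rw [← hLag']; simp [Submodule.mem_map]
  set G : Submodule ℝ (A × B) := L.map unL2 with hGdef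
  have hG0 : ∀ v : A × B, v ∈ G → v.1 = 0 → v.2 = 0 := by
    rintro v ⟨p, hp, rfl⟩ h1
    have hp0 := hgen2 p hp h1
    rw [hp0]; rfl
  refine ⟨G.toLinearPMap, Submodule.toLinearPMap_graph_eq G hG0, ?_, ?_, ?_, ?_⟩
  · -- closedness
    rw [Submodule.toLinearPMap_graph_eq G hG0]
    have hset : (G : Set (A × B))
        = (WithLp.prodContinuousLinearEquiv 2 ℝ A B).toHomeomorph '' (L : Set (WithLp 2 (A × B))) := by
      ext v
      simp only [SetLike.mem_coe, hGdef, Submodule.mem_map, Set.mem_image]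
      rfl
    rw [hset]
    exact (Homeomorph.isClosed_image _).mpr hLclosed
  · -- dense domain
    have hD : G.toLinearPMap.domain = G.map (LinearMap.fst ℝ A B) := rfl
    rw [hD]
    have hbot : (G.map (LinearMap.fst ℝ A B))ᗮ = ⊥ := by
      rw [Submodule.eq_bot_iff]
      intro a ha
      rw [Submodule.mem_orthogonal] at ha
      have hw : (p2 a (0 : B)) ∈ Lᗮ := by
        rw [Submodule.mem_orthogonal]
        intro z hz
        have h1 : z.fst ∈ G.map (LinearMap.fst ℝ A B) := ⟨(z.fst, z.snd), ⟨z, hz, rfl⟩, rfl⟩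
        have h2 := ha z.fst h1
        show (inner ℝ z.fst a + inner ℝ z.snd (0 : B) : ℝ) = 0
        rw [h2, inner_zero_right, add_zero]
      rw [hmemOrth] at hw
      obtain ⟨p, hpL, hpw⟩ := hw
      have hsnd : (p2 p.snd.fst (-p.snd.snd) : B) = 0 := by
        have := congrArg WithLp.snd hpw
        rwa [corrApply] at this
      have h21 : p.snd.fst = 0 := congrArg WithLp.fst hsnd
      have h22 : -p.snd.snd = 0 := congrArg WithLp.snd hsnd
      have h2 : p.snd = 0 := by
        apply WithLp.ofLp_injective; exact Prod.ext h21 (neg_eq_zero.mp h22)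
      have hp0 : p = 0 := hgen1 p hpL h2
      have hz : (p2 a (0 : B)) = 0 := by rw [← hpw, hp0, map_zero]
      exact congrArg WithLp.fst hz
    rw [Submodule.dense_iff_topologicalClosure_eq_top,
      ← Submodule.orthogonal_orthogonal_eq_closure, hbot, Submodule.bot_orthogonal_eq_top]
  · -- dense range
    have hrange : (Set.range fun x : G.toLinearPMap.domain => G.toLinearPMap x)
        = ↑(G.map (LinearMap.snd ℝ A B)) := by
      rw [← Submodule.toLinearPMap_range G hG0]
      exact (LinearMap.coe_range _).symm
    rw [hrange]
    have hbot : (G.map (LinearMap.snd ℝ A B))ᗮ = ⊥ := by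
      rw [Submodule.eq_bot_iff]
      intro b hb
      rw [Submodule.mem_orthogonal] at hb
      have hw : (p2 (0 : A) b) ∈ Lᗮ := by
        rw [Submodule.mem_orthogonal]
        intro z hz
        have h1 : z.snd ∈ G.map (LinearMap.snd ℝ A B) := ⟨(z.fst, z.snd), ⟨z, hz, rfl⟩, rfl⟩
        have h2 := hb z.snd h1
        show (inner ℝ z.fst (0 : A) + inner ℝ z.snd b : ℝ) = 0
        rw [h2, inner_zero_right, zero_add]
      rw [hmemOrth] at hw
      obtain ⟨p, hpL, hpw⟩ := hw
      have hfst : (p2 (-p.fst.fst) (-(-p.fst.snd)) : A) = 0 := by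
        have := congrArg WithLp.fst hpw
        rwa [corrApply] at this
      have h11 : -p.fst.fst = 0 := congrArg WithLp.fst hfst
      have h12 : -(-p.fst.snd) = 0 := congrArg WithLp.snd hfst
      have h1 : p.fst = 0 := by
        apply WithLp.ofLp_injective; exact Prod.ext (neg_eq_zero.mp h11) (by simpa using h12)
      have hp0 : p = 0 := hgen2 p hpL h1
      have hz : (p2 (0 : A) b) = 0 := by rw [← hpw, hp0, map_zero]
      exact congrArg WithLp.snd hz
    rw [Submodule.dense_iff_topologicalClosure_eq_top,
      ← Submodule.orthogonal_orthogonal_eq_closure, hbot, Submodule.bot_orthogonal_eq_top]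
  · -- trivial kernel
    intro x hx
    have hmem : ((x : A), G.toLinearPMap x) ∈ G := by
      have h := G.toLinearPMap.mem_graph x
      rwa [Submodule.toLinearPMap_graph_eq G hG0] at h
    rw [hx] at hmem
    obtain ⟨p, hpL, hpv⟩ := hmem
    have h2 : p.snd = 0 := congrArg Prod.snd hpv
    have hp0 : p = 0 := hgen1 p hpL h2
    have h1 : (unL2 p).1 = (x : A) := congrArg Prod.fst hpv
    rw [← h1, hp0]
    rfl
end
end

section
/- Let L = graph(u) be a Lagrangian in ΠV₀ ⊕ V₁ in general position, where u is the unitary from (ΠV₀ ⊕ V₁)⁺ = V₀⁻ ⊕ V₁⁺ to (ΠV₀ ⊕ V₁)⁻ = V₀⁺ ⊕ V₁⁻ with matrix entries u₀₀, u₀₁, u₁₀, u₁₁. Then the off-diagonal components u₀₁ : V₁⁺ → V₀⁺ and u₁₀ : V₀⁻ → V₁⁻ both have trivial kernel and dense range. -/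
noncomputable section

open Submodule ContinuousLinearMap

/-- The full graph of a bounded operator `S : E → F`, inside `E ⊕ F`. -/
def graphFullCorr {E F : Type*} [NormedAddCommGroup E] [InnerProductSpace ℝ E]
    [NormedAddCommGroup F] [InnerProductSpace ℝ F] (S : E →L[ℝ] F) :
    Submodule ℝ (WithLp 2 (E × F)) :=
  (⊤ : Submodule ℝ E).map (mkL2 ∘ₗ (LinearMap.id : E →ₗ[ℝ] E).prod S.toLinearMap)

section Aux

private lemma p2_inj_s9 {α β : Type*} [AddCommGroup α] [Module ℝ α] [AddCommGroup β] [Module ℝ β]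
    {a a' : α} {b b' : β} (h : p2 a b = p2 a' b') : a = a' ∧ b = b' :=
  ⟨congrArg WithLp.fst h, congrArg WithLp.snd h⟩

end Aux

/-- For a Lagrangian correspondence `L = graph(u)` in general position, the
off-diagonal blocks `u₀₁` and `u₁₀` of the unitary `u` have trivial kernel and dense range. -/
theorem offdiagonal_blocks_injective_dense_range
    {V0p V0m V1p V1m : Type*}
    [NormedAddCommGroup V0p] [InnerProductSpace ℝ V0p] [CompleteSpace V0p]
    [NormedAddCommGroup V0m] [InnerProductSpace ℝ V0m] [CompleteSpace V0m]
    [NormedAddCommGroup V1p] [InnerProductSpace ℝ V1p] [CompleteSpace V1p]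
    [NormedAddCommGroup V1m] [InnerProductSpace ℝ V1m] [CompleteSpace V1m]
    (u : WithLp 2 (V0m × V1p) →L[ℝ] WithLp 2 (V0p × V1m))
    (u00 : V0m →L[ℝ] V0p) (u01 : V1p →L[ℝ] V0p) (u10 : V0m →L[ℝ] V1m) (u11 : V1p →L[ℝ] V1m)
    (hblocks : ∀ x : WithLp 2 (V0m × V1p),
      u x = p2 (u00 x.fst + u01 x.snd) (u10 x.fst + u11 x.snd))
    (huni : IsUnitaryOp u)
    (hgen1 : ∀ p ∈ corrGraph u, p.snd = 0 → p = 0)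
    (hgen2 : ∀ p ∈ corrGraph u, p.fst = 0 → p = 0) :
    (∀ x, u01 x = 0 → x = 0) ∧ Dense (Set.range fun x => u01 x) ∧
      (∀ x, u10 x = 0 → x = 0) ∧ Dense (Set.range fun x => u10 x) := by
  obtain ⟨hnorm, hsurj⟩ := huni
  have hiso : ∀ x y : WithLp 2 (V0m × V1p), (inner ℝ (u x) (u y) : ℝ) = inner ℝ x y := fun x y =>
    (LinearIsometry.mk u.toLinearMap hnorm).inner_map_map x y
  -- injectivity of u10
  have h10 : ∀ x, u10 x = 0 → x = 0 := by
    intro x hx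
    have hmem : corrGraphMap u (p2 x 0) ∈ corrGraph u := ⟨p2 x 0, rfl⟩
    have hu : u (p2 x 0) = p2 (u00 x) (u10 x) := by
      rw [hblocks]
      show p2 (u00 x + u01 0) (u10 x + u11 0) = _
      simp
    have hsnd : (corrGraphMap u (p2 x 0)).snd = 0 := by
      have h1 : (corrGraphMap u (p2 x 0)).snd = p2 (0 : V1p) ((u (p2 x 0)).snd) := rfl
      rw [h1, hu, hx]
      rfl
    have hp0 := hgen1 _ hmem hsnd
    have h2 : x = ((corrGraphMap u (p2 x 0)).fst).snd := rfl
    rw [hp0] at h2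
    simpa using h2
  -- injectivity of u01
  have h01 : ∀ x, u01 x = 0 → x = 0 := by
    intro x hx
    have hmem : corrGraphMap u (p2 0 x) ∈ corrGraph u := ⟨p2 0 x, rfl⟩
    have hu : u (p2 0 x) = p2 (u01 x) (u11 x) := by
      rw [hblocks]
      show p2 (u00 0 + u01 x) (u10 0 + u11 x) = _
      simp
    have hfst : (corrGraphMap u (p2 0 x)).fst = 0 := by
      have h1 : (corrGraphMap u (p2 0 x)).fst = p2 ((u (p2 0 x)).fst) (0 : V0m) := rfl
      rw [h1, hu, hx]
      rfl
    have hp0 := hgen2 _ hmem hfst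
    have h2 : x = ((corrGraphMap u (p2 0 x)).snd).fst := rfl
    rw [hp0] at h2
    simpa using h2
  -- dense range of u01
  have hd01 : (LinearMap.range (u01 : V1p →ₗ[ℝ] V0p))ᗮ = ⊥ := by
    rw [Submodule.eq_bot_iff]
    intro y hy
    obtain ⟨w, hw⟩ := hsurj (p2 y 0)
    have hw2 : w.snd = 0 := by
      have hz : ∀ c : V1p, (inner ℝ c w.snd : ℝ) = 0 := by
        intro c
        have hI := hiso (p2 0 c) w
        rw [hw] at hI
        have hu : u (p2 0 c) = p2 (u01 c) (u11 c) := by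
          rw [hblocks]
          show p2 (u00 0 + u01 c) (u10 0 + u11 c) = _
          simp
        rw [hu] at hI
        rw [WithLp.prod_inner_apply, WithLp.prod_inner_apply] at hI
        have hyz : (inner ℝ (u01 c) y : ℝ) = 0 :=
          hy (u01 c) (LinearMap.mem_range_self _ c)
        have hI' : (inner ℝ (0 : V0m) w.fst : ℝ) + inner ℝ c w.snd
            = inner ℝ (u01 c) y + inner ℝ (u11 c) (0 : V1m) := hI.symm
        simpa [hyz] using hI'
      have := hz w.snd
      exact inner_self_eq_zero.mp this
    have hcomp := hblocks w
    rw [hw] at hcomp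
    obtain ⟨hy1, hy2⟩ := p2_inj_s9 hcomp
    rw [hw2] at hy1 hy2
    simp only [map_zero, add_zero] at hy1 hy2
    rw [h10 w.fst hy2.symm] at hy1
    simpa using hy1
  -- dense range of u10
  have hd10 : (LinearMap.range (u10 : V0m →ₗ[ℝ] V1m))ᗮ = ⊥ := by
    rw [Submodule.eq_bot_iff]
    intro y hy
    obtain ⟨w, hw⟩ := hsurj (p2 0 y)
    have hw1 : w.fst = 0 := by
      have hz : ∀ b : V0m, (inner ℝ b w.fst : ℝ) = 0 := by
        intro b
        have hI := hiso (p2 b 0) w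
        rw [hw] at hI
        have hu : u (p2 b 0) = p2 (u00 b) (u10 b) := by
          rw [hblocks]
          show p2 (u00 b + u01 0) (u10 b + u11 0) = _
          simp
        rw [hu] at hI
        rw [WithLp.prod_inner_apply, WithLp.prod_inner_apply] at hI
        have hyz : (inner ℝ (u10 b) y : ℝ) = 0 :=
          hy (u10 b) (LinearMap.mem_range_self _ b)
        have hI' : (inner ℝ b w.fst : ℝ) + inner ℝ (0 : V1p) w.snd
            = inner ℝ (u00 b) (0 : V0p) + inner ℝ (u10 b) y := hI.symm
        simpa [hyz] using hI'
      have := hz w.fst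
      exact inner_self_eq_zero.mp this
    have hcomp := hblocks w
    rw [hw] at hcomp
    obtain ⟨hy1, hy2⟩ := p2_inj_s9 hcomp
    rw [hw1] at hy1 hy2
    simp only [map_zero, zero_add] at hy1 hy2
    rw [h01 w.snd hy1.symm] at hy2
    simpa using hy2
  refine ⟨h01, ?_, h10, ?_⟩
  · have hd : Dense ((LinearMap.range (u01 : V1p →ₗ[ℝ] V0p) : Submodule ℝ V0p) : Set V0p) :=
      Submodule.dense_iff_topologicalClosure_eq_top.mpr
        (Submodule.topologicalClosure_eq_top_iff.mpr hd01)
    simpa [LinearMap.coe_range] using hd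
  · have hd : Dense ((LinearMap.range (u10 : V0m →ₗ[ℝ] V1m) : Submodule ℝ V1m) : Set V1m) :=
      Submodule.dense_iff_topologicalClosure_eq_top.mpr
        (Submodule.topologicalClosure_eq_top_iff.mpr hd10)
    simpa [LinearMap.coe_range] using hd
end
end

section
/- The composition L₁₂ ∘ L₀₁ = {(x₀, x₂) : ∃ x₁ ∈ V₁ with (x₀,x₁) ∈ L₀₁ and (x₁,x₂) ∈ L₁₂} of two Lagrangian correspondences L₀₁ ⊆ ΠV₀ ⊕ V₁ and L₁₂ ⊆ ΠV₁ ⊕ V₂ is a B-isotropic subspace of ΠV₀ ⊕ V₂. -/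
noncomputable section

open Submodule ContinuousLinearMap

theorem isLag_iso {W : Type*} [NormedAddCommGroup W] [InnerProductSpace ℝ W]
    (J : W →ₗ[ℝ] W) (L : Submodule ℝ W) (h : IsLagrangianWith J L) :
    IsIsotropicWith J L := by
  intro x hx y hy
  have hJx : J x ∈ Lᗮ := h ▸ Submodule.mem_map_of_mem hx
  rw [real_inner_comm]
  exact (Submodule.mem_orthogonal _ _).mp hJx y hy

theorem corrGrading_inner {Ap Am Bp Bm : Type*} [NormedAddCommGroup Ap] [InnerProductSpace ℝ Ap]
    [NormedAddCommGroup Am] [InnerProductSpace ℝ Am]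
    [NormedAddCommGroup Bp] [InnerProductSpace ℝ Bp]
    [NormedAddCommGroup Bm] [InnerProductSpace ℝ Bm]
    (x y : WithLp 2 (WithLp 2 (Ap × Am) × WithLp 2 (Bp × Bm))) :
    (inner ℝ (corrGrading x) y : ℝ) =
      -(inner ℝ (sGrading x.ofLp.1) y.ofLp.1 : ℝ) + (inner ℝ (sGrading x.ofLp.2) y.ofLp.2 : ℝ) := by
  unfold corrGrading
  simp [WithLp.prod_inner_apply]

/-- The composition of two Lagrangian correspondences
`L₀₁ ⊆ ΠV₀ ⊕ V₁` and `L₁₂ ⊆ ΠV₁ ⊕ V₂` is a `B`-isotropic subspace of `ΠV₀ ⊕ V₂`. -/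
theorem compCorr_isotropic
    {V0p V0m V1p V1m V2p V2m : Type*}
    [NormedAddCommGroup V0p] [InnerProductSpace ℝ V0p]
    [NormedAddCommGroup V0m] [InnerProductSpace ℝ V0m]
    [NormedAddCommGroup V1p] [InnerProductSpace ℝ V1p]
    [NormedAddCommGroup V1m] [InnerProductSpace ℝ V1m]
    [NormedAddCommGroup V2p] [InnerProductSpace ℝ V2p]
    [NormedAddCommGroup V2m] [InnerProductSpace ℝ V2m]
    (L01 : Submodule ℝ (WithLp 2 (WithLp 2 (V0p × V0m) × WithLp 2 (V1p × V1m))))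
    (L12 : Submodule ℝ (WithLp 2 (WithLp 2 (V1p × V1m) × WithLp 2 (V2p × V2m))))
    (h01 : IsLagCorr L01) (h12 : IsLagCorr L12) :
    IsIsotropicCorr (Ap := V0p) (Am := V0m) (Bp := V2p) (Bm := V2m) (compCorr L01 L12) := by
  have iso01 := isLag_iso _ _ h01
  have iso12 := isLag_iso _ _ h12
  intro x hx y hy
  rw [compCorr, Submodule.mem_map] at hx hy
  obtain ⟨z, ⟨hzL, hzk⟩, rfl⟩ := hx
  obtain ⟨w, ⟨hwL, hwk⟩, rfl⟩ := hy
  simp only [SetLike.mem_coe, LinearMap.mem_ker, LinearMap.sub_apply, LinearMap.comp_apply,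
    sub_eq_zero] at hzk hwk
  simp only [SetLike.mem_coe, Submodule.mem_prod] at hzL hwL
  have e1 := iso01 z.1 hzL.1 w.1 hwL.1
  have e2 := iso12 z.2 hzL.2 w.2 hwL.2
  rw [corrGrading_inner] at e1 e2
  rw [corrGrading_inner]
  simp only [LinearMap.comp_apply, LinearMap.prod_apply, Function.prod_apply, LinearMap.fst_apply,
    LinearMap.snd_apply,
    WithLp.coe_linearEquiv, WithLp.coe_symm_linearEquiv, WithLp.toLp_fst, WithLp.toLp_snd,
    WithLp.ofLp_toLp,
    unL2, mkL2, LinearEquiv.coe_coe]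
    at e1 e2 hzk hwk ⊢
  rw [hzk, hwk] at e1
  linarith
end
end

section
/- Let L₀₁ = graph(u) ⊆ ΠV₀ ⊕ V₁ and L₁₂ = graph(v) ⊆ ΠV₁ ⊕ V₂ be Lagrangian correspondences given by unitaries u, v with block entries u_{ij}, v_{ij}. If x ∈ V₁⁺ satisfies v₁₁ u₁₁ x = x, then u₀₁ x = 0 and v₂₁ u₁₁ x = 0; similarly, if x ∈ V₁⁻ satisfies u₁₁ v₁₁ x = x, then u₀₁ v₁₁ x = 0 and v₂₁ x = 0. -/
noncomputable section

open Submodule ContinuousLinearMap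

/-- For Lagrangian correspondences `L₀₁ = graph(u)` and `L₁₂ = graph(v)`
given by unitaries with block entries `uᵢⱼ`, `vᵢⱼ`: if `x ∈ V₁⁺` satisfies `v₁₁u₁₁x = x`,
then `u₀₁x = 0` and `v₂₁u₁₁x = 0`; if `x ∈ V₁⁻` satisfies `u₁₁v₁₁x = x`, then
`u₀₁v₁₁x = 0` and `v₂₁x = 0`. -/
theorem kernel_of_one_sub_composed_diagonal_blocks
    {V0p V0m V1p V1m V2p V2m : Type*}
    [NormedAddCommGroup V0p] [InnerProductSpace ℝ V0p] [CompleteSpace V0p]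
    [NormedAddCommGroup V0m] [InnerProductSpace ℝ V0m] [CompleteSpace V0m]
    [NormedAddCommGroup V1p] [InnerProductSpace ℝ V1p] [CompleteSpace V1p]
    [NormedAddCommGroup V1m] [InnerProductSpace ℝ V1m] [CompleteSpace V1m]
    [NormedAddCommGroup V2p] [InnerProductSpace ℝ V2p] [CompleteSpace V2p]
    [NormedAddCommGroup V2m] [InnerProductSpace ℝ V2m] [CompleteSpace V2m]
    (u : WithLp 2 (V0m × V1p) →L[ℝ] WithLp 2 (V0p × V1m))
    (v : WithLp 2 (V1m × V2p) →L[ℝ] WithLp 2 (V1p × V2m))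
    (u00 : V0m →L[ℝ] V0p) (u01 : V1p →L[ℝ] V0p) (u10 : V0m →L[ℝ] V1m) (u11 : V1p →L[ℝ] V1m)
    (v11 : V1m →L[ℝ] V1p) (v12 : V2p →L[ℝ] V1p) (v21 : V1m →L[ℝ] V2m) (v22 : V2p →L[ℝ] V2m)
    (hub : ∀ x : WithLp 2 (V0m × V1p),
      u x = p2 (u00 x.fst + u01 x.snd) (u10 x.fst + u11 x.snd))
    (hvb : ∀ y : WithLp 2 (V1m × V2p),
      v y = p2 (v11 y.fst + v12 y.snd) (v21 y.fst + v22 y.snd))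
    (hu : IsUnitaryOp u) (hv : IsUnitaryOp v) :
    (∀ x : V1p, v11 (u11 x) = x → (u01 x = 0 ∧ v21 (u11 x) = 0)) ∧
    (∀ y : V1m, u11 (v11 y) = y → (u01 (v11 y) = 0 ∧ v21 y = 0)) := by
  have hueq : ∀ x : V1p, ‖u01 x‖ ^ 2 + ‖u11 x‖ ^ 2 = ‖x‖ ^ 2 := by
    intro x
    have h1 : u (p2 (0 : V0m) x) = p2 (u01 x) (u11 x) := by
      rw [hub]; simp [p2]
    have h2 : ‖u (p2 (0 : V0m) x)‖ = ‖p2 (0 : V0m) x‖ := hu.1 _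
    rw [h1] at h2
    have h3 := WithLp.prod_norm_sq_eq_of_L2 (p2 (u01 x) (u11 x))
    have h4 := WithLp.prod_norm_sq_eq_of_L2 (p2 (0 : V0m) x)
    rw [h2, h4] at h3
    simpa [p2, WithLp.linearEquiv_symm_apply, WithLp.coe_symm_linearEquiv] using h3.symm
  have hveq : ∀ y : V1m, ‖v11 y‖ ^ 2 + ‖v21 y‖ ^ 2 = ‖y‖ ^ 2 := by
    intro y
    have h1 : v (p2 y (0 : V2p)) = p2 (v11 y) (v21 y) := by
      rw [hvb]; simp [p2]
    have h2 : ‖v (p2 y (0 : V2p))‖ = ‖p2 y (0 : V2p)‖ := hv.1 _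
    rw [h1] at h2
    have h3 := WithLp.prod_norm_sq_eq_of_L2 (p2 (v11 y) (v21 y))
    have h4 := WithLp.prod_norm_sq_eq_of_L2 (p2 y (0 : V2p))
    rw [h2, h4] at h3
    simpa [p2, WithLp.linearEquiv_symm_apply, WithLp.coe_symm_linearEquiv] using h3.symm
  constructor
  · intro x hx
    have e1 := hueq x
    have e2 := hveq (u11 x)
    rw [hx] at e2
    have ha : (0:ℝ) ≤ ‖u01 x‖ ^ 2 := by positivity
    have hb : (0:ℝ) ≤ ‖v21 (u11 x)‖ ^ 2 := by positivity
    constructor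
    · have : ‖u01 x‖ ^ 2 = 0 := by nlinarith
      simpa using this
    · have : ‖v21 (u11 x)‖ ^ 2 = 0 := by nlinarith
      simpa using this
  · intro y hy
    have e1 := hueq (v11 y)
    have e2 := hveq y
    rw [hy] at e1
    have ha : (0:ℝ) ≤ ‖u01 (v11 y)‖ ^ 2 := by positivity
    have hb : (0:ℝ) ≤ ‖v21 y‖ ^ 2 := by positivity
    constructor
    · have : ‖u01 (v11 y)‖ ^ 2 = 0 := by nlinarith
      simpa using this
    · have : ‖v21 y‖ ^ 2 = 0 := by nlinarith
      simpa using this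
end
end
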